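/- The set of triples (x,y,z) of nonzero complex numbers satisfying the system z⁻¹ + 1 = 0, −(z+1)·y⁻² = 0, and y⁻¹ − x·z⁻² = 0 is exactly {(x, x⁻¹, −1) : x ∈ ℂ, x ≠ 0}; moreover, for every such solution the Hessian matrix [[0, 0, −z⁻²], [0, 2(z+1)y⁻³, −y⁻²], [−z⁻², −y⁻², 2x·z⁻³]] has determinant 0, i.e., every solution is a degenerate critical point. -/
import Mathlib


/-- the Case (b)(i) leading term equations have solution set
`{(x, x⁻¹, −1) : x ≠ 0}`, and every solution is a degenerate critical point. -/
theorem stmt_11 :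
    ({p : ℂ × ℂ × ℂ | p.1 ≠ 0 ∧ p.2.1 ≠ 0 ∧ p.2.2 ≠ 0 ∧
        p.2.2⁻¹ + 1 = 0 ∧ -((p.2.2 + 1) * (p.2.1 ^ 2)⁻¹) = 0 ∧
        p.2.1⁻¹ - p.1 * (p.2.2 ^ 2)⁻¹ = 0} =
      {p : ℂ × ℂ × ℂ | ∃ x : ℂ, x ≠ 0 ∧ p = (x, x⁻¹, -1)}) ∧
    ∀ x y z : ℂ, x ≠ 0 → y ≠ 0 → z ≠ 0 →
      z⁻¹ + 1 = 0 → -((z + 1) * (y ^ 2)⁻¹) = 0 → y⁻¹ - x * (z ^ 2)⁻¹ = 0 →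
      Matrix.det !![0, 0, -(z ^ 2)⁻¹;
                    0, 2 * (z + 1) * (y ^ 3)⁻¹, -(y ^ 2)⁻¹;
                    -(z ^ 2)⁻¹, -(y ^ 2)⁻¹, 2 * x * (z ^ 3)⁻¹] = 0 := by
  constructor
  · ext ⟨x, y, z⟩
    simp only [Set.mem_setOf_eq]
    constructor
    · rintro ⟨hx, hy, hz, h1, _, h3⟩
      have hz1 : z = -1 := by
        field_simp at h1
        linear_combination h1
      subst hz1
      have hy1 : y = x⁻¹ := by
        have h3' : y⁻¹ = x := by
          have : (-1 : ℂ) ^ 2 = 1 := by norm_num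
          rw [this, inv_one, mul_one, sub_eq_zero] at h3
          exact h3
        rw [← h3', inv_inv]
      exact ⟨x, hx, by simp [hy1]⟩
    · rintro ⟨w, hw, h⟩
      obtain ⟨rfl, rfl, rfl⟩ : x = w ∧ y = w⁻¹ ∧ z = -1 := by
        simpa [Prod.ext_iff] using h
      refine ⟨hw, inv_ne_zero hw, by norm_num, by norm_num, by norm_num, ?_⟩
      simp [inv_inv]
  · intro x y z hx hy hz h1 h2 h3
    have hz1 : z = -1 := by
      field_simp at h1
      linear_combination h1
    subst hz1
    simp [Matrix.det_fin_three]
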